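/- The triple of conjugacy classes (θ₁, θ₂, θ₃) ∈ [0,2π]³ can be realized as classes of g₁, g₂ and g₁g₂ in SU(2) if and only if |θ₁ − θ₂| ≤ θ₃ ≤ θ₁ + θ₂ and θ₁ + θ₂ + θ₃ ≤ 4π. -/

import Mathlib

open MeasureTheory Complex Matrix Real

noncomputable section

/-- The group SU(2), realized as the subgroup of the 2×2 unitary group
consisting of matrices of determinant one. -/
def SU2grp : Subgroup (Matrix.unitaryGroup (Fin 2) ℂ) where
  carrier := {g | (g : Matrix (Fin 2) (Fin 2) ℂ).det = 1}
  one_mem' := by simp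
  mul_mem' := by
    intro a b ha hb
    simp only [Set.mem_setOf_eq, Matrix.UnitaryGroup.mul_val, Matrix.det_mul] at *
    rw [ha, hb, one_mul]
  inv_mem' := by
    intro a ha
    simp only [Set.mem_setOf_eq] at *
    have h : ((a⁻¹ : Matrix.unitaryGroup (Fin 2) ℂ) : Matrix (Fin 2) (Fin 2) ℂ)
        = star (a : Matrix (Fin 2) (Fin 2) ℂ) := rfl
    rw [h]
    show ((a : Matrix (Fin 2) (Fin 2) ℂ).conjTranspose).det = 1
    rw [Matrix.det_conjTranspose, ha, star_one]

/-- Elements of SU(2). -/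
abbrev SU2 : Type := SU2grp

instance : MeasurableSpace SU2 := borel SU2

/-- The underlying 2×2 complex matrix of an element of SU(2). -/
def SU2.mat (g : SU2) : Matrix (Fin 2) (Fin 2) ℂ :=
  ((g : Matrix.unitaryGroup (Fin 2) ℂ) : Matrix (Fin 2) (Fin 2) ℂ)

/-- The diagonal matrix `h_θ = diag (e^{iθ/2}, e^{-iθ/2})`. -/
def Hmat (θ : ℝ) : Matrix (Fin 2) (Fin 2) ℂ :=
  !![Complex.exp (θ * Complex.I / 2), 0; 0, Complex.exp (-(θ * Complex.I / 2))]

/-- The rotation matrix `a_θ`. -/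
def Amat (θ : ℝ) : Matrix (Fin 2) (Fin 2) ℂ :=
  !![(Real.cos (θ / 2) : ℂ), -(Real.sin (θ / 2) : ℂ);
     (Real.sin (θ / 2) : ℂ), (Real.cos (θ / 2) : ℂ)]

/-- Structure of an element of SU(2): `d = conj a`, `c = -conj b`, `|a|² + |b|² = 1`. -/
lemma SU2.entries (g : SU2) :
    g.mat 1 1 = starRingEnd ℂ (g.mat 0 0) ∧
    g.mat 1 0 = -starRingEnd ℂ (g.mat 0 1) ∧
    Complex.normSq (g.mat 0 0) + Complex.normSq (g.mat 0 1) = 1 := by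
  have hdet : g.mat.det = 1 := g.2
  have hu : g.mat * star g.mat = 1 :=
    Matrix.mem_unitaryGroup_iff.mp (g : Matrix.unitaryGroup (Fin 2) ℂ).2
  set a := g.mat 0 0; set b := g.mat 0 1; set c := g.mat 1 0; set d := g.mat 1 1
  have hD : a * d - b * c = 1 := by rw [← Matrix.det_fin_two]; exact hdet
  have e00 : (g.mat * star g.mat) 0 0 = (1 : Matrix (Fin 2) (Fin 2) ℂ) 0 0 := by rw [hu]
  have e01 : (g.mat * star g.mat) 0 1 = (1 : Matrix (Fin 2) (Fin 2) ℂ) 0 1 := by rw [hu]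
  simp only [Matrix.mul_apply, Fin.sum_univ_two, Matrix.star_eq_conjTranspose,
    Matrix.conjTranspose_apply, Matrix.one_apply, Complex.star_def] at e00 e01
  norm_num at e00 e01
  have e01' : starRingEnd ℂ a * c + starRingEnd ℂ b * d = 0 := by
    have := congrArg (starRingEnd ℂ) e01
    simpa [mul_comm] using this
  have hd : d = starRingEnd ℂ a := by
    linear_combination -d * e00 + b * e01' + starRingEnd ℂ a * hD
  have hc : c = -starRingEnd ℂ b := by
    linear_combination -c * e00 + a * e01' - starRingEnd ℂ b * hD
  refine ⟨hd, hc, ?_⟩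
  have h' : a * starRingEnd ℂ a + b * starRingEnd ℂ b = 1 := e00
  rw [Complex.mul_conj, Complex.mul_conj] at h'
  exact_mod_cast h'

/-- Construct an element of SU(2) from `a b : ℂ` with `|a|² + |b|² = 1`. -/
def SU2.mk2 (a b : ℂ) (h : Complex.normSq a + Complex.normSq b = 1) : SU2 :=
  ⟨⟨!![a, b; -starRingEnd ℂ b, starRingEnd ℂ a], by
    rw [Matrix.mem_unitaryGroup_iff]
    ext i j
    have h' : a * starRingEnd ℂ a + b * starRingEnd ℂ b = 1 := by
      rw [Complex.mul_conj, Complex.mul_conj]; exact_mod_cast h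
    fin_cases i <;> fin_cases j <;>
      simp [Matrix.mul_apply, Fin.sum_univ_two, Matrix.star_eq_conjTranspose,
        Matrix.conjTranspose_apply, Matrix.one_apply, Complex.star_def] <;>
      ring_nf <;>
      linear_combination h'⟩, by
    show (!![a, b; -starRingEnd ℂ b, starRingEnd ℂ a]).det = 1
    rw [Matrix.det_fin_two]
    have h' : a * starRingEnd ℂ a + b * starRingEnd ℂ b = 1 := by
      rw [Complex.mul_conj, Complex.mul_conj]; exact_mod_cast h
    simp
    linear_combination h'⟩

lemma SU2.mk2_mat (a b : ℂ) (h : Complex.normSq a + Complex.normSq b = 1) :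
    (SU2.mk2 a b h).mat = !![a, b; -starRingEnd ℂ b, starRingEnd ℂ a] := rfl

lemma SU2.mul_mat (g₁ g₂ : SU2) : (g₁ * g₂).mat = g₁.mat * g₂.mat := rfl

lemma SU2.trace_eq (g : SU2) : g.mat.trace = ((2 * (g.mat 0 0).re : ℝ) : ℂ) := by
  rw [Matrix.trace_fin_two, (SU2.entries g).1, Complex.add_conj]

lemma SU2.trace_mul_eq (g₁ g₂ : SU2) :
    (g₁ * g₂).mat.trace =
      ((2 * (g₁.mat 0 0 * g₂.mat 0 0).re
        - 2 * (g₁.mat 0 1 * starRingEnd ℂ (g₂.mat 0 1)).re : ℝ) : ℂ) := by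
  obtain ⟨hd₁, hc₁, -⟩ := SU2.entries g₁
  obtain ⟨hd₂, hc₂, -⟩ := SU2.entries g₂
  rw [SU2.mul_mat, Matrix.trace_fin_two]
  simp only [Matrix.mul_apply, Fin.sum_univ_two, hd₁, hc₁, hd₂, hc₂]
  have h1 : g₁.mat 0 0 * g₂.mat 0 0 + starRingEnd ℂ (g₁.mat 0 0) * starRingEnd ℂ (g₂.mat 0 0)
      = ((2 * (g₁.mat 0 0 * g₂.mat 0 0).re : ℝ) : ℂ) := by
    rw [← _root_.map_mul, Complex.add_conj]
  have h2 : g₁.mat 0 1 * starRingEnd ℂ (g₂.mat 0 1)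
      + starRingEnd ℂ (g₁.mat 0 1) * g₂.mat 0 1
      = ((2 * (g₁.mat 0 1 * starRingEnd ℂ (g₂.mat 0 1)).re : ℝ) : ℂ) := by
    have : starRingEnd ℂ (g₁.mat 0 1) * g₂.mat 0 1
        = starRingEnd ℂ (g₁.mat 0 1 * starRingEnd ℂ (g₂.mat 0 1)) := by
      rw [_root_.map_mul, Complex.conj_conj]
    rw [this, Complex.add_conj]
  push_cast at h1 h2 ⊢
  linear_combination h1 - h2

set_option maxHeartbeats 1600000 in
theorem triangle_inequalities_conjugacy_classes_SU2
    (θ₁ θ₂ θ₃ : ℝ) (h₁ : θ₁ ∈ Set.Icc 0 (2 * π)) (h₂ : θ₂ ∈ Set.Icc 0 (2 * π))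
    (h₃ : θ₃ ∈ Set.Icc 0 (2 * π)) :
    (∃ g₁ g₂ : SU2,
        Matrix.trace g₁.mat = ((2 * Real.cos (θ₁ / 2) : ℝ) : ℂ) ∧
        Matrix.trace g₂.mat = ((2 * Real.cos (θ₂ / 2) : ℝ) : ℂ) ∧
        Matrix.trace (g₁ * g₂).mat = ((2 * Real.cos (θ₃ / 2) : ℝ) : ℂ)) ↔
      (|θ₁ - θ₂| ≤ θ₃ ∧ θ₃ ≤ θ₁ + θ₂ ∧ θ₁ + θ₂ + θ₃ ≤ 4 * π) := by
  obtain ⟨hθ₁0, hθ₁2⟩ := h₁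
  obtain ⟨hθ₂0, hθ₂2⟩ := h₂
  obtain ⟨hθ₃0, hθ₃2⟩ := h₃
  have hπ : (0:ℝ) < π := Real.pi_pos
  set c₁ := Real.cos (θ₁ / 2) with hc₁def
  set c₂ := Real.cos (θ₂ / 2) with hc₂def
  set c₃ := Real.cos (θ₃ / 2) with hc₃def
  set s₁ := Real.sin (θ₁ / 2) with hs₁def
  set s₂ := Real.sin (θ₂ / 2) with hs₂def
  have hs₁0 : 0 ≤ s₁ := Real.sin_nonneg_of_nonneg_of_le_pi (by linarith) (by linarith)
  have hs₂0 : 0 ≤ s₂ := Real.sin_nonneg_of_nonneg_of_le_pi (by linarith) (by linarith)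
  have hs₁sq : s₁ ^ 2 = 1 - c₁ ^ 2 := by
    rw [hs₁def, hc₁def, Real.sin_sq]
  have hs₂sq : s₂ ^ 2 = 1 - c₂ ^ 2 := by
    rw [hs₂def, hc₂def, Real.sin_sq]
  -- Step A : the triangle inequalities are equivalent to bounds on cos (θ₃/2)
  have stepA : (|θ₁ - θ₂| ≤ θ₃ ∧ θ₃ ≤ θ₁ + θ₂ ∧ θ₁ + θ₂ + θ₃ ≤ 4 * π)
      ↔ (c₁ * c₂ - s₁ * s₂ ≤ c₃ ∧ c₃ ≤ c₁ * c₂ + s₁ * s₂) := by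
    have habs : Real.cos (|θ₁ / 2 - θ₂ / 2|) = c₁ * c₂ + s₁ * s₂ := by
      rw [Real.cos_abs, Real.cos_sub]
    have hsum : Real.cos (θ₁ / 2 + θ₂ / 2) = c₁ * c₂ - s₁ * s₂ := by
      rw [Real.cos_add]
    have habs_le : |θ₁ / 2 - θ₂ / 2| ≤ π := abs_sub_le_iff.mpr ⟨by linarith, by linarith⟩
    constructor
    · rintro ⟨hA, hB, hC⟩
      constructor
      · -- c₁c₂ - s₁s₂ ≤ c₃
        by_cases hcase : θ₁ + θ₂ ≤ 2 * π
        · have := Real.cos_le_cos_of_nonneg_of_le_pi (x := θ₃ / 2) (y := θ₁ / 2 + θ₂ / 2)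
            (by linarith) (by linarith) (by linarith)
          linarith [hsum ▸ this]
        · have h2 : Real.cos (2 * π - (θ₁ / 2 + θ₂ / 2)) = c₁ * c₂ - s₁ * s₂ := by
            rw [Real.cos_sub]
            simp [Real.cos_two_pi, Real.sin_two_pi, Real.cos_add]
            rfl
          have := Real.cos_le_cos_of_nonneg_of_le_pi (x := θ₃ / 2)
            (y := 2 * π - (θ₁ / 2 + θ₂ / 2)) (by linarith) (by linarith) (by linarith)
          linarith [h2 ▸ this]
      · -- c₃ ≤ c₁c₂ + s₁s₂
        have := Real.cos_le_cos_of_nonneg_of_le_pi (x := |θ₁ / 2 - θ₂ / 2|) (y := θ₃ / 2)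
          (abs_nonneg _) (by linarith) (by
            rw [abs_sub_le_iff]; constructor <;> [skip; skip] <;>
              cases' abs_sub_le_iff.mp hA with p q <;> linarith)
        linarith [habs ▸ this]
    · rintro ⟨hlo, hhi⟩
      refine ⟨?_, ?_, ?_⟩
      · by_contra hcon
        push_neg at hcon
        have hmem1 : θ₃ / 2 ∈ Set.Icc 0 π := ⟨by linarith, by linarith⟩
        have hmem2 : |θ₁ / 2 - θ₂ / 2| ∈ Set.Icc 0 π := ⟨abs_nonneg _, habs_le⟩
        have hlt : θ₃ / 2 < |θ₁ / 2 - θ₂ / 2| := by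
          cases' abs_cases (θ₁ - θ₂) with p p <;> cases' abs_cases (θ₁/2 - θ₂/2) with q q <;>
            rw [q.1] <;> linarith [p.1, p.2, q.2]
        have := Real.strictAntiOn_cos hmem1 hmem2 hlt
        rw [habs] at this
        linarith
      · by_contra hcon
        push_neg at hcon
        have hmem1 : θ₁ / 2 + θ₂ / 2 ∈ Set.Icc 0 π := ⟨by linarith, by linarith⟩
        have hmem2 : θ₃ / 2 ∈ Set.Icc 0 π := ⟨by linarith, by linarith⟩
        have := Real.strictAntiOn_cos hmem1 hmem2 (by linarith)
        rw [hsum] at this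
        linarith
      · by_contra hcon
        push_neg at hcon
        have h2 : Real.cos (2 * π - (θ₁ / 2 + θ₂ / 2)) = c₁ * c₂ - s₁ * s₂ := by
          rw [Real.cos_sub]
          simp [Real.cos_two_pi, Real.sin_two_pi, Real.cos_add]
          rfl
        have hmem1 : 2 * π - (θ₁ / 2 + θ₂ / 2) ∈ Set.Icc 0 π := ⟨by linarith, by linarith⟩
        have hmem2 : θ₃ / 2 ∈ Set.Icc 0 π := ⟨by linarith, by linarith⟩
        have := Real.strictAntiOn_cos hmem1 hmem2 (by linarith)
        rw [h2] at this
        linarith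
  rw [stepA]
  constructor
  · -- forward: existence implies bounds
    rintro ⟨g₁, g₂, ht₁, ht₂, ht₃⟩
    obtain ⟨-, -, hn₁⟩ := SU2.entries g₁
    obtain ⟨-, -, hn₂⟩ := SU2.entries g₂
    set a₁ := g₁.mat 0 0; set b₁ := g₁.mat 0 1
    set a₂ := g₂.mat 0 0; set b₂ := g₂.mat 0 1
    have hre₁ : a₁.re = c₁ := by
      have := (SU2.trace_eq g₁).symm.trans ht₁
      have := Complex.ofReal_inj.mp this
      linarith
    have hre₂ : a₂.re = c₂ := by
      have := (SU2.trace_eq g₂).symm.trans ht₂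
      have := Complex.ofReal_inj.mp this
      linarith
    have hre₃ : (a₁ * a₂).re - (b₁ * starRingEnd ℂ b₂).re = c₃ := by
      have := (SU2.trace_mul_eq g₁ g₂).symm.trans ht₃
      have := Complex.ofReal_inj.mp this
      linarith
    simp only [Complex.normSq_apply] at hn₁ hn₂
    simp only [Complex.mul_re, Complex.conj_re, Complex.conj_im] at hre₃
    set x₁ := a₁.im; set u₁ := b₁.re; set v₁ := b₁.im
    set x₂ := a₂.im; set u₂ := b₂.re; set v₂ := b₂.im
    clear ht₁ ht₂ ht₃
    clear_value a₁ b₁ a₂ b₂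
    have hnn₁ : x₁ ^ 2 + u₁ ^ 2 + v₁ ^ 2 = s₁ ^ 2 := by
      rw [hs₁sq, ← hre₁]; nlinarith [hn₁]
    have hnn₂ : x₂ ^ 2 + u₂ ^ 2 + v₂ ^ 2 = s₂ ^ 2 := by
      rw [hs₂sq, ← hre₂]; nlinarith [hn₂]
    have hS : (x₁ * x₂ + u₁ * u₂ + v₁ * v₂) ^ 2 ≤ (s₁ * s₂) ^ 2 := by
      have key : (x₁ * x₂ + u₁ * u₂ + v₁ * v₂) ^ 2
          ≤ (x₁ ^ 2 + u₁ ^ 2 + v₁ ^ 2) * (x₂ ^ 2 + u₂ ^ 2 + v₂ ^ 2) := by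
        nlinarith [sq_nonneg (x₁ * u₂ - x₂ * u₁), sq_nonneg (x₁ * v₂ - x₂ * v₁),
          sq_nonneg (u₁ * v₂ - u₂ * v₁)]
      rw [hnn₁, hnn₂] at key
      nlinarith [key]
    obtain ⟨hS1, hS2⟩ := abs_le_of_sq_le_sq' hS (mul_nonneg hs₁0 hs₂0)
    rw [hre₁, hre₂] at hre₃
    constructor <;> linarith [hre₃, hS1, hS2]
  · -- backward: bounds imply existence
    rintro ⟨hlo, hhi⟩
    set x : ℝ := if s₁ = 0 then 0 else (c₁ * c₂ - c₃) / s₁ with hxdef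
    have hsx : s₁ * x = c₁ * c₂ - c₃ := by
      by_cases hs : s₁ = 0
      · rw [hs] at hlo hhi
        rw [hxdef, if_pos hs, hs, zero_mul]
        linarith [hlo, hhi]
      · rw [hxdef, if_neg hs]
        field_simp
    have hx2 : x ^ 2 ≤ s₂ ^ 2 := by
      by_cases hs : s₁ = 0
      · rw [hxdef, if_pos hs]; simpa using sq_nonneg s₂
      · have hs₁pos : 0 < s₁ := lt_of_le_of_ne hs₁0 (Ne.symm hs)
        nlinarith [hsx, mul_pos hs₁pos hs₁pos, hlo, hhi]
    set br : ℝ := Real.sqrt (s₂ ^ 2 - x ^ 2) with hbrdef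
    have hbr2 : br ^ 2 = s₂ ^ 2 - x ^ 2 := Real.sq_sqrt (by linarith)
    have hnorm₁ : Complex.normSq ((c₁ : ℂ) + (s₁ : ℂ) * Complex.I)
        + Complex.normSq (0 : ℂ) = 1 := by
      rw [Complex.normSq_add_mul_I]
      simp
      nlinarith [hs₁sq]
    have hnorm₂ : Complex.normSq ((c₂ : ℂ) + (x : ℂ) * Complex.I)
        + Complex.normSq ((br : ℂ)) = 1 := by
      rw [Complex.normSq_add_mul_I, Complex.normSq_ofReal]
      nlinarith [hbr2, hs₂sq]
    refine ⟨SU2.mk2 _ _ hnorm₁, SU2.mk2 _ _ hnorm₂, ?_, ?_, ?_⟩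
    · rw [SU2.trace_eq]
      congr 1
      rw [show (SU2.mk2 _ _ hnorm₁).mat 0 0 = (c₁ : ℂ) + (s₁ : ℂ) * Complex.I from rfl]
      simp
    · rw [SU2.trace_eq]
      congr 1
      rw [show (SU2.mk2 _ _ hnorm₂).mat 0 0 = (c₂ : ℂ) + (x : ℂ) * Complex.I from rfl]
      simp
    · rw [SU2.trace_mul_eq]
      congr 1
      rw [show (SU2.mk2 _ _ hnorm₁).mat 0 0 = (c₁ : ℂ) + (s₁ : ℂ) * Complex.I from rfl,
        show (SU2.mk2 _ _ hnorm₁).mat 0 1 = (0 : ℂ) from rfl,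
        show (SU2.mk2 _ _ hnorm₂).mat 0 0 = (c₂ : ℂ) + (x : ℂ) * Complex.I from rfl]
      simp [Complex.mul_re, Complex.add_re, Complex.add_im, Complex.ofReal_re,
        Complex.ofReal_im, Complex.I_re, Complex.I_im]
      linarith [hsx]

end
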